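/- Let f = (f₁₁,f₁₂,f₂₁,f₂₂) ∈ ℝ⁴ satisfy p(f) ≥ 0 or m(f) ≤ 2, where p(f) := f₁₁f₁₂f₂₁f₂₂ and m(f) := (min_{i,j} |f_{ij}|) · (Σ_{i,j} |f_{ij}|⁻¹). Then sup { f·c : c ∈ Q } = φ_𝒞(f), where φ_𝒞(f) := max{ |f₁₁+f₁₂+f₂₁+f₂₂|, |f₁₁+f₁₂−f₂₁−f₂₂|, |f₁₁−f₁₂+f₂₁−f₂₂|, |f₁₁−f₁₂−f₂₁+f₂₂| } is the support function of the classical polytope, and f·c denotes Σ_{i,j} f_{ij} c_{ij}. -/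

import Mathlib

set_option maxHeartbeats 1000000

def Cmat (c : Fin 4 → ℝ) (u v : ℝ) : Matrix (Fin 4) (Fin 4) ℝ :=
  !![1, u, c 0, c 1;
     u, 1, c 2, c 3;
     c 0, c 2, 1, v;
     c 1, c 3, v, 1]

def Qbody : Set (Fin 4 → ℝ) := {c | ∃ u v : ℝ, (Cmat c u v).PosSemidef}

/-- `p(f) = f₁₁ f₁₂ f₂₁ f₂₂`. -/
def ppoly (f : Fin 4 → ℝ) : ℝ := f 0 * f 1 * f 2 * f 3

/-- `m(f) = (min |f_ij|) · Σ |f_ij|⁻¹`. -/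
noncomputable def mfun (f : Fin 4 → ℝ) : ℝ :=
  (min (min |f 0| |f 1|) (min |f 2| |f 3|)) * (∑ i, |f i|⁻¹)

/-- The support function of the classical polytope. -/
def phiC (f : Fin 4 → ℝ) : ℝ :=
  max (max |f 0 + f 1 + f 2 + f 3| |f 0 + f 1 - f 2 - f 3|)
      (max |f 0 - f 1 + f 2 - f 3| |f 0 - f 1 - f 2 + f 3|)

lemma mem_Q (z0 z1 z2 z3 : ℝ) (h0 : z0^2 = 1) (h1 : z1^2 = 1) (h2 : z2^2 = 1) (h3 : z3^2 = 1) :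
    (![z0*z2, z0*z3, z1*z2, z1*z3] : Fin 4 → ℝ) ∈ Qbody := by
  refine ⟨z0*z1, z2*z3, Matrix.PosSemidef.of_dotProduct_mulVec_nonneg ?_ ?_⟩
  · ext i j
    fin_cases i <;> fin_cases j <;>
      simp [Cmat, Matrix.conjTranspose, Matrix.vecHead, Matrix.vecTail]
  · intro x
    have hx : dotProduct (star x)
        ((Cmat ![z0*z2, z0*z3, z1*z2, z1*z3] (z0*z1) (z2*z3)).mulVec x)
        = (z0 * x 0 + z1 * x 1 + z2 * x 2 + z3 * x 3)^2 := by
      simp [Cmat, Matrix.mulVec, dotProduct, Fin.sum_univ_four]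
      linear_combination (-(x 0)^2)*h0 + (-(x 1)^2)*h1 + (-(x 2)^2)*h2 + (-(x 3)^2)*h3
    rw [hx]
    positivity

lemma key (a b c d w s r : ℝ) (ha : 0 < a) (hb : 0 < b) (hc : 0 < c) (hd : 0 < d)
    (hdc : d ≤ c) (hw1 : w ≤ 1) (hw2 : -1 ≤ w) (hs : 0 ≤ s) (hr : 0 ≤ r)
    (hs2 : s^2 ≤ a^2+b^2+2*a*b*w) (hr2 : r^2 ≤ c^2+d^2-2*c*d*w)
    (hcond : d*(b*c+a*c+a*b) ≤ a*b*c) : s + r ≤ a + b + c - d := by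
  have hcond' : c*d*(a+b) ≤ a*b*(c-d) := by nlinarith [hcond]
  have hab2 : s^2 ≤ (a+b)^2 := by nlinarith [mul_pos ha hb]
  have hsab : s ≤ a + b := by
    nlinarith [hab2, hs, sq_nonneg (s - (a+b)), sq_nonneg (s + (a+b))]
  by_contra hlt
  push_neg at hlt
  have h4 : 0 ≤ a + b - s := by linarith
  have h5 : a + b - s < r - (c - d) := by linarith
  have hrcd : 0 ≤ r - (c - d) := by linarith
  have h6 : c*d*s ≤ a*b*r := by
    nlinarith [mul_le_mul_of_nonneg_left hsab (mul_pos hc hd).le, hcond',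
      mul_nonneg (mul_pos ha hb).le hrcd]
  have h7 : c*d*(a+b+s) ≤ a*b*(r+(c-d)) := by nlinarith [h6, hcond']
  have hpos : 0 < c*d*(a+b+s) := by positivity
  have main : a*b*(r^2 - (c-d)^2) ≤ c*d*((a+b)^2 - s^2) := by
    nlinarith [mul_le_mul_of_nonneg_left hr2 (le_of_lt (mul_pos ha hb)),
      mul_le_mul_of_nonneg_left hs2 (le_of_lt (mul_pos hc hd))]
  have h8 : (a+b-s) * (c*d*(a+b+s)) < (r-(c-d)) * (c*d*(a+b+s)) :=
    mul_lt_mul_of_pos_right h5 hpos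
  have h9 : (r-(c-d)) * (c*d*(a+b+s)) ≤ (r-(c-d)) * (a*b*(r+(c-d))) :=
    mul_le_mul_of_nonneg_left h7 hrcd
  nlinarith [main, h8, h9]

lemma phi_bounds (f : Fin 4 → ℝ) :
    |f 0 + f 1 + f 2 + f 3| ≤ phiC f ∧ |f 0 + f 1 - f 2 - f 3| ≤ phiC f ∧
    |f 0 - f 1 + f 2 - f 3| ≤ phiC f ∧ |f 0 - f 1 - f 2 + f 3| ≤ phiC f := by
  unfold phiC
  exact ⟨le_trans (le_max_left _ _) (le_max_left _ _),
    le_trans (le_max_right _ _) (le_max_left _ _),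
    le_trans (le_max_left _ _) (le_max_right _ _),
    le_trans (le_max_right _ _) (le_max_right _ _)⟩

lemma L2 (f : Fin 4 → ℝ) :
    (|f 0| + |f 1| + |f 2| + |f 3| - 2 * |f 0| ≤ phiC f) ∧
    (|f 0| + |f 1| + |f 2| + |f 3| - 2 * |f 1| ≤ phiC f) ∧
    (|f 0| + |f 1| + |f 2| + |f 3| - 2 * |f 2| ≤ phiC f) ∧
    (|f 0| + |f 1| + |f 2| + |f 3| - 2 * |f 3| ≤ phiC f) := by
  obtain ⟨A1, A2, A3, A4⟩ := phi_bounds f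
  refine ⟨?_, ?_, ?_, ?_⟩ <;>
  · rcases abs_choice (f 0) with h0|h0 <;> rcases abs_choice (f 1) with h1|h1 <;>
    rcases abs_choice (f 2) with h2|h2 <;> rcases abs_choice (f 3) with h3|h3 <;>
    linarith [le_abs_self (f 0 + f 1 + f 2 + f 3), neg_abs_le (f 0 + f 1 + f 2 + f 3),
      le_abs_self (f 0 + f 1 - f 2 - f 3), neg_abs_le (f 0 + f 1 - f 2 - f 3),
      le_abs_self (f 0 - f 1 + f 2 - f 3), neg_abs_le (f 0 - f 1 + f 2 - f 3),
      le_abs_self (f 0 - f 1 - f 2 + f 3), neg_abs_le (f 0 - f 1 - f 2 + f 3),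
      abs_nonneg (f 0), abs_nonneg (f 1), abs_nonneg (f 2), abs_nonneg (f 3)]

lemma abs_sub_eq_of (x y : ℝ) (h : x*y ≤ 0) : |x - y| = |x| + |y| := by
  rcases lt_trichotomy x 0 with hx|hx|hx
  · have hy : 0 ≤ y := by nlinarith
    rw [abs_of_neg hx, abs_of_nonneg hy, abs_of_nonpos (by linarith)]; ring
  · rw [hx]; simp
  · have hy : y ≤ 0 := by nlinarith
    rw [abs_of_pos hx, abs_of_nonpos hy, abs_of_nonneg (by linarith)]; ring

lemma abs_add_eq_of (x y : ℝ) (h : 0 ≤ x*y) : |x + y| = |x| + |y| := by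
  have := abs_sub_eq_of x (-y) (by nlinarith)
  simpa using this

lemma L1 (f : Fin 4 → ℝ) (hp : 0 ≤ ppoly f) :
    |f 0| + |f 1| + |f 2| + |f 3| ≤ phiC f := by
  obtain ⟨A1, A2, A3, A4⟩ := phi_bounds f
  have K1 : |f 0 + f 1| + |f 2 + f 3| ≤ phiC f := by
    rcases abs_choice (f 0 + f 1) with h|h <;> rcases abs_choice (f 2 + f 3) with h'|h' <;>
      linarith [le_abs_self (f 0 + f 1 + f 2 + f 3), neg_abs_le (f 0 + f 1 + f 2 + f 3),
        le_abs_self (f 0 + f 1 - f 2 - f 3), neg_abs_le (f 0 + f 1 - f 2 - f 3)]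
  have K2 : |f 0 - f 1| + |f 2 - f 3| ≤ phiC f := by
    rcases abs_choice (f 0 - f 1) with h|h <;> rcases abs_choice (f 2 - f 3) with h'|h' <;>
      linarith [le_abs_self (f 0 - f 1 + f 2 - f 3), neg_abs_le (f 0 - f 1 + f 2 - f 3),
        le_abs_self (f 0 - f 1 - f 2 + f 3), neg_abs_le (f 0 - f 1 - f 2 + f 3)]
  unfold ppoly at hp
  rcases le_or_gt 0 (f 0 * f 1) with h01|h01 <;> rcases le_or_gt 0 (f 2 * f 3) with h23|h23
  · linarith [abs_add_eq_of (f 0) (f 1) h01, abs_add_eq_of (f 2) (f 3) h23, K1]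
  · have hz : f 0 * f 1 ≤ 0 := by nlinarith
    linarith [abs_sub_eq_of (f 0) (f 1) hz, abs_sub_eq_of (f 2) (f 3) h23.le, K2]
  · have hz : f 2 * f 3 ≤ 0 := by nlinarith
    linarith [abs_sub_eq_of (f 0) (f 1) h01.le, abs_sub_eq_of (f 2) (f 3) hz, K2]
  · linarith [abs_sub_eq_of (f 0) (f 1) h01.le, abs_sub_eq_of (f 2) (f 3) h23.le, K2]

lemma cond_of (g0 g1 g2 g3 : ℝ) (h0 : 0 < g0) (h1 : 0 < g1) (h2 : 0 < g2) (h3 : 0 < g3)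
    (hm : g3*(g0⁻¹+g1⁻¹+g2⁻¹+g3⁻¹) ≤ 2) : g3*(g1*g2+g0*g2+g0*g1) ≤ g0*g1*g2 := by
  have hprod : (0:ℝ) < g0*g1*g2*g3 := by positivity
  have H := mul_le_mul_of_nonneg_right hm hprod.le
  have i0 : g0⁻¹ * g0 = 1 := inv_mul_cancel₀ h0.ne'
  have i1 : g1⁻¹ * g1 = 1 := inv_mul_cancel₀ h1.ne'
  have i2 : g2⁻¹ * g2 = 1 := inv_mul_cancel₀ h2.ne'
  have i3 : g3⁻¹ * g3 = 1 := inv_mul_cancel₀ h3.ne'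
  have e : g3*(g0⁻¹+g1⁻¹+g2⁻¹+g3⁻¹)*(g0*g1*g2*g3)
      = g3*(g1*g2*g3+g0*g2*g3+g0*g1*g3+g0*g1*g2) := by
    linear_combination (g3*g1*g2*g3)*i0 + (g3*g0*g2*g3)*i1 + (g3*g0*g1*g3)*i2 + (g3*g0*g1*g2)*i3
  rw [e] at H
  nlinarith [H, h0, h1, h2, h3, mul_pos (mul_pos h0 h1) h2]

lemma upper (f : Fin 4 → ℝ) (h : 0 ≤ ppoly f ∨ mfun f ≤ 2)
    (c : Fin 4 → ℝ) (hc : c ∈ Qbody) : ∑ i, f i * c i ≤ phiC f := by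
  obtain ⟨u, v, hC⟩ := hc
  have hq : ∀ x0 x1 x2 x3 : ℝ, 0 ≤ x0^2+x1^2+x2^2+x3^2
      + 2*(x0*x1*u + x0*x2*(c 0) + x0*x3*(c 1) + x1*x2*(c 2) + x1*x3*(c 3) + x2*x3*v) := by
    intro x0 x1 x2 x3
    have := hC.dotProduct_mulVec_nonneg ![x0,x1,x2,x3]
    simp [Cmat, Matrix.mulVec, dotProduct, Fin.sum_univ_four] at this
    nlinarith [this]
  rw [Fin.sum_univ_four]
  rcases le_or_gt 0 (ppoly f) with hp | hp
  · -- even case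
    have b0 : f 0 * c 0 ≤ |f 0| := by
      nlinarith [hq 1 0 1 0, hq 1 0 (-1) 0, le_abs_self (f 0), neg_abs_le (f 0)]
    have b1 : f 1 * c 1 ≤ |f 1| := by
      nlinarith [hq 1 0 0 1, hq 1 0 0 (-1), le_abs_self (f 1), neg_abs_le (f 1)]
    have b2 : f 2 * c 2 ≤ |f 2| := by
      nlinarith [hq 0 1 1 0, hq 0 1 (-1) 0, le_abs_self (f 2), neg_abs_le (f 2)]
    have b3 : f 3 * c 3 ≤ |f 3| := by
      nlinarith [hq 0 1 0 1, hq 0 1 0 (-1), le_abs_self (f 3), neg_abs_le (f 3)]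
    linarith [L1 f hp]
  · -- odd case
    have hm : mfun f ≤ 2 := h.resolve_left (by linarith)
    have hne0 : f 0 ≠ 0 := fun hz => by simp [ppoly, hz] at hp
    have hne1 : f 1 ≠ 0 := fun hz => by simp [ppoly, hz] at hp
    have hne2 : f 2 ≠ 0 := fun hz => by simp [ppoly, hz] at hp
    have hne3 : f 3 ≠ 0 := fun hz => by simp [ppoly, hz] at hp
    have g0p : 0 < |f 0| := abs_pos.mpr hne0
    have g1p : 0 < |f 1| := abs_pos.mpr hne1
    have g2p : 0 < |f 2| := abs_pos.mpr hne2
    have g3p : 0 < |f 3| := abs_pos.mpr hne3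
    set g0 := |f 0|; set g1 := |f 1|; set g2 := |f 2|; set g3 := |f 3|
    have hA : (f 0 * c 0 + f 1 * c 1)^2 ≤ f 0^2 + f 1^2 + 2*(f 0 * f 1)*v := by
      linarith [hq (f 0 * c 0 + f 1 * c 1) 0 (-(f 0)) (-(f 1))]
    have hB : (f 2 * c 2 + f 3 * c 3)^2 ≤ f 2^2 + f 3^2 + 2*(f 2 * f 3)*v := by
      linarith [hq 0 (f 2 * c 2 + f 3 * c 3) (-(f 2)) (-(f 3))]
    have hv1 : v ≤ 1 := by linarith [hq 0 0 1 (-1)]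
    have hv2 : -1 ≤ v := by linarith [hq 0 0 1 1]
    have hprod : (f 0 * f 1) * (f 2 * f 3) < 0 := by
      have : ppoly f = (f 0 * f 1) * (f 2 * f 3) := by unfold ppoly; ring
      linarith [this ▸ hp]
    obtain ⟨w, hw1, hw2, e01, e23⟩ :
        ∃ w : ℝ, w ≤ 1 ∧ -1 ≤ w ∧ g0*g1*w = (f 0 * f 1)*v ∧ -(g2*g3*w) = (f 2 * f 3)*v := by
      rcases lt_or_ge (f 0 * f 1) 0 with hn | hn
      · refine ⟨-v, by linarith, by linarith, ?_, ?_⟩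
        · have : g0*g1 = -(f 0 * f 1) := by
            rw [← abs_mul]; exact abs_of_neg hn
          rw [this]; ring
        · have hps : 0 < f 2 * f 3 := by nlinarith
          have : g2*g3 = f 2 * f 3 := by rw [← abs_mul]; exact abs_of_pos hps
          rw [this]; ring
      · have hps : 0 < f 0 * f 1 := lt_of_le_of_ne hn (by
          intro hz; rw [← hz] at hprod; simp at hprod)
        refine ⟨v, hv1, hv2, ?_, ?_⟩
        · have : g0*g1 = f 0 * f 1 := by rw [← abs_mul]; exact abs_of_pos hps
          rw [this]
        · have hns : f 2 * f 3 < 0 := by nlinarith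
          have : g2*g3 = -(f 2 * f 3) := by rw [← abs_mul]; exact abs_of_neg hns
          rw [this]; ring
    have hA' : |f 0 * c 0 + f 1 * c 1|^2 ≤ g0^2 + g1^2 + 2*g0*g1*w := by
      rw [sq_abs]
      linarith [hA, e01, sq_abs (f 0), sq_abs (f 1)]
    have hB' : |f 2 * c 2 + f 3 * c 3|^2 ≤ g2^2 + g3^2 - 2*g2*g3*w := by
      rw [sq_abs]
      linarith [hB, e23, sq_abs (f 2), sq_abs (f 3)]
    have hSle : f 0 * c 0 + f 1 * c 1 + (f 2 * c 2 + f 3 * c 3)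
        ≤ |f 0 * c 0 + f 1 * c 1| + |f 2 * c 2 + f 3 * c 3| := by
      have := le_abs_self (f 0 * c 0 + f 1 * c 1)
      have := le_abs_self (f 2 * c 2 + f 3 * c 3)
      linarith
    have hmf : (min (min g0 g1) (min g2 g3)) * (g0⁻¹+g1⁻¹+g2⁻¹+g3⁻¹) ≤ 2 := by
      have : mfun f = (min (min g0 g1) (min g2 g3)) * (g0⁻¹+g1⁻¹+g2⁻¹+g3⁻¹) := by
        unfold mfun; rw [Fin.sum_univ_four]
      linarith [this ▸ hm]
    obtain ⟨B0, B1, B2, B3⟩ := L2 f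
    have habs0 : 0 ≤ |f 0 * c 0 + f 1 * c 1| := abs_nonneg _
    have habs1 : 0 ≤ |f 2 * c 2 + f 3 * c 3| := abs_nonneg _
    rcases min_choice (min g0 g1) (min g2 g3) with hmc | hmc <;> rw [hmc] at hmf
    · have hlemin := min_eq_left_iff.mp hmc
      rcases min_choice g0 g1 with hmc' | hmc' <;> rw [hmc'] at hmf <;>
        rw [hmc'] at hlemin
      · -- min = g0
        have hle1 : g0 ≤ g1 := min_eq_left_iff.mp hmc'
        have hle2 : g0 ≤ g2 := hlemin.trans (min_le_left _ _)
        have hle3 : g0 ≤ g3 := hlemin.trans (min_le_right _ _)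
        have hcond := cond_of g2 g3 g1 g0 g2p g3p g1p g0p (by linarith [hmf])
        have hk := key g2 g3 g1 g0 (-w) (|f 2 * c 2 + f 3 * c 3|) (|f 0 * c 0 + f 1 * c 1|)
          g2p g3p g1p g0p hle1 (by linarith) (by linarith)
          habs1 habs0 (by linarith [hB']) (by linarith [hA']) hcond
        linarith [hk, B0, hSle]
      · -- min = g1
        have hle1 : g1 ≤ g0 := min_eq_right_iff.mp hmc'
        have hle2 : g1 ≤ g2 := hlemin.trans (min_le_left _ _)
        have hle3 : g1 ≤ g3 := hlemin.trans (min_le_right _ _)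
        have hcond := cond_of g2 g3 g0 g1 g2p g3p g0p g1p (by linarith [hmf])
        have hk := key g2 g3 g0 g1 (-w) (|f 2 * c 2 + f 3 * c 3|) (|f 0 * c 0 + f 1 * c 1|)
          g2p g3p g0p g1p hle1 (by linarith) (by linarith)
          habs1 habs0 (by linarith [hB']) (by linarith [hA']) hcond
        linarith [hk, B1, hSle]
    · have hlemin := min_eq_right_iff.mp hmc
      rcases min_choice g2 g3 with hmc' | hmc' <;> rw [hmc'] at hmf <;>
        rw [hmc'] at hlemin
      · -- min = g2
        have hle1 : g2 ≤ g3 := min_eq_left_iff.mp hmc'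
        have hle2 : g2 ≤ g0 := hlemin.trans (min_le_left _ _)
        have hle3 : g2 ≤ g1 := hlemin.trans (min_le_right _ _)
        have hcond := cond_of g0 g1 g3 g2 g0p g1p g3p g2p (by linarith [hmf])
        have hk := key g0 g1 g3 g2 w (|f 0 * c 0 + f 1 * c 1|) (|f 2 * c 2 + f 3 * c 3|)
          g0p g1p g3p g2p hle1 hw1 hw2
          habs0 habs1 (by linarith [hA']) (by linarith [hB']) hcond
        linarith [hk, B2, hSle]
      · -- min = g3
        have hle1 : g3 ≤ g2 := min_eq_right_iff.mp hmc'
        have hle2 : g3 ≤ g0 := hlemin.trans (min_le_left _ _)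
        have hle3 : g3 ≤ g1 := hlemin.trans (min_le_right _ _)
        have hcond := cond_of g0 g1 g2 g3 g0p g1p g2p g3p (by linarith [hmf])
        have hk := key g0 g1 g2 g3 w (|f 0 * c 0 + f 1 * c 1|) (|f 2 * c 2 + f 3 * c 3|)
          g0p g1p g2p g3p hle1 hw1 hw2
          habs0 habs1 (by linarith [hA']) (by linarith [hB']) hcond
        linarith [hk, B3, hSle]

theorem stmt5 (f : Fin 4 → ℝ) (h : 0 ≤ ppoly f ∨ mfun f ≤ 2) :
    sSup ((fun c : Fin 4 → ℝ => ∑ i, f i * c i) '' Qbody) = phiC f := by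
  have himg : ∀ z0 z1 z2 z3 : ℝ, z0^2=1 → z1^2=1 → z2^2=1 → z3^2=1 →
      f 0*(z0*z2) + f 1*(z0*z3) + f 2*(z1*z2) + f 3*(z1*z3)
        ∈ (fun c : Fin 4 → ℝ => ∑ i, f i * c i) '' Qbody := by
    intro z0 z1 z2 z3 h0 h1 h2 h3
    exact ⟨_, mem_Q z0 z1 z2 z3 h0 h1 h2 h3, by simp [Fin.sum_univ_four]⟩
  have hmem : phiC f ∈ (fun c : Fin 4 → ℝ => ∑ i, f i * c i) '' Qbody := by
    rcases max_choice (max |f 0 + f 1 + f 2 + f 3| |f 0 + f 1 - f 2 - f 3|)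
      (max |f 0 - f 1 + f 2 - f 3| |f 0 - f 1 - f 2 + f 3|) with hm | hm <;>
    [rcases max_choice |f 0 + f 1 + f 2 + f 3| |f 0 + f 1 - f 2 - f 3| with hm' | hm';
     rcases max_choice |f 0 - f 1 + f 2 - f 3| |f 0 - f 1 - f 2 + f 3| with hm' | hm']
    · rcases abs_choice (f 0 + f 1 + f 2 + f 3) with ha | ha
      · have hv : phiC f = f 0*(1*1) + f 1*(1*1) + f 2*(1*1) + f 3*(1*1) := by
          unfold phiC; rw [hm, hm', ha]; ring
        rw [hv]; exact himg 1 1 1 1 (by norm_num) (by norm_num) (by norm_num) (by norm_num)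
      · have hv : phiC f = f 0*(1*(-1)) + f 1*(1*(-1)) + f 2*(1*(-1)) + f 3*(1*(-1)) := by
          unfold phiC; rw [hm, hm', ha]; ring
        rw [hv]; exact himg 1 1 (-1) (-1) (by norm_num) (by norm_num) (by norm_num) (by norm_num)
    · rcases abs_choice (f 0 + f 1 - f 2 - f 3) with ha | ha
      · have hv : phiC f = f 0*(1*1) + f 1*(1*1) + f 2*((-1)*1) + f 3*((-1)*1) := by
          unfold phiC; rw [hm, hm', ha]; ring
        rw [hv]; exact himg 1 (-1) 1 1 (by norm_num) (by norm_num) (by norm_num) (by norm_num)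
      · have hv : phiC f = f 0*(1*(-1)) + f 1*(1*(-1)) + f 2*((-1)*(-1)) + f 3*((-1)*(-1)) := by
          unfold phiC; rw [hm, hm', ha]; ring
        rw [hv]; exact himg 1 (-1) (-1) (-1) (by norm_num) (by norm_num) (by norm_num) (by norm_num)
    · rcases abs_choice (f 0 - f 1 + f 2 - f 3) with ha | ha
      · have hv : phiC f = f 0*(1*1) + f 1*(1*(-1)) + f 2*(1*1) + f 3*(1*(-1)) := by
          unfold phiC; rw [hm, hm', ha]; ring
        rw [hv]; exact himg 1 1 1 (-1) (by norm_num) (by norm_num) (by norm_num) (by norm_num)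
      · have hv : phiC f = f 0*(1*(-1)) + f 1*(1*1) + f 2*(1*(-1)) + f 3*(1*1) := by
          unfold phiC; rw [hm, hm', ha]; ring
        rw [hv]; exact himg 1 1 (-1) 1 (by norm_num) (by norm_num) (by norm_num) (by norm_num)
    · rcases abs_choice (f 0 - f 1 - f 2 + f 3) with ha | ha
      · have hv : phiC f = f 0*(1*1) + f 1*(1*(-1)) + f 2*((-1)*1) + f 3*((-1)*(-1)) := by
          unfold phiC; rw [hm, hm', ha]; ring
        rw [hv]; exact himg 1 (-1) 1 (-1) (by norm_num) (by norm_num) (by norm_num) (by norm_num)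
      · have hv : phiC f = f 0*(1*(-1)) + f 1*(1*1) + f 2*((-1)*(-1)) + f 3*((-1)*1) := by
          unfold phiC; rw [hm, hm', ha]; ring
        rw [hv]; exact himg 1 (-1) (-1) 1 (by norm_num) (by norm_num) (by norm_num) (by norm_num)
  refine le_antisymm ?_ ?_
  · exact csSup_le ⟨_, hmem⟩ (by rintro y ⟨c, hc, rfl⟩; exact upper f h c hc)
  · exact le_csSup ⟨phiC f, by rintro y ⟨c, hc, rfl⟩; exact upper f h c hc⟩ hmem
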